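/- Let ε > 0 and δ ∈ (0,1) satisfy δ·(e^ε + 1) ≤ 1, let μ = 1 − (1/ε)·ln(δ·(e^ε + 1)), and let w(x) = ((e^ε − 1)/(e^ε + 1))·exp(−ε·|x − μ|) for x ∈ ℤ. For a histogram n : Fin m → ℤ, define the noisy-histogram mechanism whose output measure on a set S ⊆ (Fin m → ℤ) is H_n(S) = ∑_{z : Fin m → ℤ, (n + max(0,z)) ∈ S} ∏_{i} w(z_i), where (n + max(0,z))_i = n_i + max(0, z_i). Then for any two histograms n, n′ : Fin m → ℤ that agree on all coordinates except one coordinate j where |n_j − n′_j| = 1, and for any S ⊆ (Fin m → ℤ), H_n(S) ≤ e^ε · H_{n′}(S) + δ. -/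

import Mathlib

open scoped ENNReal



lemma aux_tsum_pi : ∀ (m : ℕ) (V : Fin m → ℤ → ℝ≥0∞),
    (∑' z : Fin m → ℤ, ∏ i, V i (z i)) = ∏ i, ∑' y : ℤ, V i y := by
  intro m
  induction m with
  | zero =>
    intro V
    simp only [Finset.univ_eq_empty, Finset.prod_empty]
    rw [tsum_eq_single (fun i => (0:ℤ)) (fun b hb => absurd (Subsingleton.elim b _) hb)]
  | succ k ih =>
    intro V
    rw [← (Fin.consEquiv (fun _ : Fin (k + 1) => ℤ)).tsum_eq]
    have h1 : ∀ p : ℤ × (Fin k → ℤ),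
        (∏ i, V i ((Fin.consEquiv (fun _ : Fin (k + 1) => ℤ)) p i)) =
          V 0 p.1 * ∏ i : Fin k, V i.succ (p.2 i) := by
      intro p
      rw [Fin.prod_univ_succ]
      simp [Fin.consEquiv]
    calc (∑' p : ℤ × (Fin k → ℤ), ∏ i, V i ((Fin.consEquiv (fun _ : Fin (k+1) => ℤ)) p i))
        = ∑' (a : ℤ) (b : Fin k → ℤ), V 0 a * ∏ i : Fin k, V i.succ (b i) := by
          rw [← ENNReal.tsum_prod]; exact tsum_congr h1
      _ = (∑' y : ℤ, V 0 y) * ∏ i : Fin k, ∑' y : ℤ, V i.succ y := by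
          rw [← ih (fun i => V i.succ)]
          simp_rw [ENNReal.tsum_mul_left]
          rw [ENNReal.tsum_mul_right]
      _ = ∏ i, ∑' y : ℤ, V i y := by rw [Fin.prod_univ_succ]
lemma aux_geom_summable (ε C : ℝ) (hε : 0 < ε) :
    Summable fun n : ℕ => C * Real.exp (-ε) ^ n :=
  (summable_geometric_of_lt_one (Real.exp_nonneg _)
    (Real.exp_lt_one_iff.2 (by linarith))).mul_left C

lemma aux_geom_ofReal (ε C : ℝ) (hε : 0 < ε) (hC : 0 ≤ C) :
    ∑' n : ℕ, ENNReal.ofReal (C * Real.exp (-ε) ^ n) =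
      ENNReal.ofReal (C / (1 - Real.exp (-ε))) := by
  rw [← ENNReal.ofReal_tsum_of_nonneg (fun n => by positivity) (aux_geom_summable ε C hε),
    tsum_mul_left, tsum_geometric_of_lt_one (Real.exp_nonneg _)
      (Real.exp_lt_one_iff.2 (by linarith)), div_eq_mul_inv]

def auxELower (k : ℤ) : ℕ ≃ {y : ℤ // y ≤ k} where
  toFun n := ⟨k - n, by omega⟩
  invFun y := (k - y.1).toNat
  left_inv n := by simp
  right_inv y := Subtype.ext (show k - ((k - y.1).toNat : ℤ) = y.1 by omega)

def auxEUpper (k : ℤ) : ℕ ≃ {y : ℤ // k ≤ y} where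
  toFun n := ⟨k + n, by omega⟩
  invFun y := (y.1 - k).toNat
  left_inv n := by simp
  right_inv y := Subtype.ext (show k + ((y.1 - k).toNat : ℤ) = y.1 by omega)

/-- Lower half-line sum. -/
lemma aux_lower (ε c μ : ℝ) (hε : 0 < ε) (hc : 0 ≤ c) (k : ℤ) (hk : (k : ℝ) ≤ μ) :
    ∑' y : {y : ℤ // y ≤ k}, ENNReal.ofReal (c * Real.exp (-ε * |(y : ℝ) - μ|)) =
      ENNReal.ofReal (c * Real.exp (-ε * (μ - k)) / (1 - Real.exp (-ε))) := by
  rw [← (auxELower k).tsum_eq]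
  have hterm : ∀ n : ℕ,
      ENNReal.ofReal (c * Real.exp (-ε * |((auxELower k n : ℤ) : ℝ) - μ|)) =
      ENNReal.ofReal ((c * Real.exp (-ε * (μ - k))) * Real.exp (-ε) ^ n) := by
    intro n
    congr 1
    have h1 : ((auxELower k n : ℤ) : ℝ) = (k : ℝ) - n := by
      simp [auxELower]
    rw [h1]
    have h2 : |(k : ℝ) - n - μ| = (μ - k) + n := by
      rw [abs_of_nonpos (by linarith [Nat.cast_nonneg (α := ℝ) n])]; ring
    rw [h2, mul_assoc]
    congr 1
    rw [← Real.exp_nat_mul, ← Real.exp_add]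
    ring_nf
  rw [tsum_congr hterm, aux_geom_ofReal ε _ hε (by positivity)]

/-- Upper half-line sum. -/
lemma aux_upper (ε c μ : ℝ) (hε : 0 < ε) (hc : 0 ≤ c) (k : ℤ) (hk : μ ≤ (k : ℝ)) :
    ∑' y : {y : ℤ // k ≤ y}, ENNReal.ofReal (c * Real.exp (-ε * |(y : ℝ) - μ|)) =
      ENNReal.ofReal (c * Real.exp (-ε * (k - μ)) / (1 - Real.exp (-ε))) := by
  rw [← (auxEUpper k).tsum_eq]
  have hterm : ∀ n : ℕ,
      ENNReal.ofReal (c * Real.exp (-ε * |((auxEUpper k n : ℤ) : ℝ) - μ|)) =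
      ENNReal.ofReal ((c * Real.exp (-ε * (k - μ))) * Real.exp (-ε) ^ n) := by
    intro n
    congr 1
    have h1 : ((auxEUpper k n : ℤ) : ℝ) = (k : ℝ) + n := by
      simp [auxEUpper]
    rw [h1]
    have h2 : |(k : ℝ) + n - μ| = ((k:ℝ) - μ) + n := by
      rw [abs_of_nonneg (by linarith [Nat.cast_nonneg (α := ℝ) n])]; ring
    rw [h2, mul_assoc]
    congr 1
    rw [← Real.exp_nat_mul, ← Real.exp_add]
    ring_nf
  rw [tsum_congr hterm, aux_geom_ofReal ε _ hε (by positivity)]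
lemma aux_M1 (ε δ μ : ℝ) (hε : 0 < ε) (hδ0 : 0 < δ)
    (hD : Real.exp (ε * (1 - μ)) = δ * (Real.exp ε + 1)) (hμ1 : 1 ≤ μ) :
    ∑' y : {y : ℤ // y ≤ (0:ℤ)},
      ENNReal.ofReal (((Real.exp ε - 1) / (Real.exp ε + 1)) * Real.exp (-ε * |(y : ℝ) - μ|)) =
      ENNReal.ofReal δ := by
  have hE : 1 < Real.exp ε := Real.one_lt_exp_iff.2 hε
  have hc : 0 ≤ (Real.exp ε - 1) / (Real.exp ε + 1) := by
    apply div_nonneg <;> linarith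
  rw [aux_lower ε _ μ hε hc 0 (by norm_num; linarith)]
  congr 1
  have hexpμ : Real.exp (-(ε * μ)) = δ * (Real.exp ε + 1) / Real.exp ε := by
    have h1 : Real.exp (ε * (1 - μ)) = Real.exp ε * Real.exp (-(ε * μ)) := by
      rw [← Real.exp_add]; ring_nf
    rw [h1] at hD
    field_simp at hD ⊢
    linarith
  have hr : Real.exp (-ε) = (Real.exp ε)⁻¹ := Real.exp_neg ε
  have h2 : -ε * (μ - ((0:ℤ):ℝ)) = -(ε * μ) := by push_cast; ring
  rw [h2, hexpμ, hr]
  have h3 : Real.exp ε ≠ 0 := by positivity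
  have h4 : Real.exp ε + 1 ≠ 0 := by linarith
  have h5 : Real.exp ε - 1 ≠ 0 := by linarith
  field_simp

lemma aux_M2 (ε μ : ℝ) (hε : 0 < ε) (hμ1 : 1 ≤ μ) :
    ∑' y : ℤ,
      ENNReal.ofReal (((Real.exp ε - 1) / (Real.exp ε + 1)) * Real.exp (-ε * |(y : ℝ) - μ|)) ≤ 1 := by
  have hE : 1 < Real.exp ε := Real.one_lt_exp_iff.2 hε
  set c := (Real.exp ε - 1) / (Real.exp ε + 1) with hcdef
  have hc : 0 ≤ c := by apply div_nonneg <;> linarith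
  set W : ℤ → ℝ≥0∞ := fun y => ENNReal.ofReal (c * Real.exp (-ε * |(y : ℝ) - μ|)) with hW
  set k : ℤ := ⌊μ⌋ with hk
  have hkμ : (k : ℝ) ≤ μ := Int.floor_le μ
  have hμk : μ < (k : ℝ) + 1 := Int.lt_floor_add_one μ
  have hr1 : 0 < 1 - Real.exp (-ε) := by
    have := Real.exp_lt_one_iff.2 (neg_lt_zero.2 hε); linarith
  have hsplit : ∀ y : ℤ, W y =
      ({y : ℤ | y ≤ k}).indicator W y + ({y : ℤ | k + 1 ≤ y}).indicator W y := by
    intro y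
    simp only [Set.indicator_apply, Set.mem_setOf_eq]
    by_cases h : y ≤ k
    · rw [if_pos h, if_neg (by omega), add_zero]
    · rw [if_neg h, if_pos (by omega), zero_add]
  calc ∑' y : ℤ, W y
      = (∑' y : {y : ℤ // y ≤ k}, W y) + ∑' y : {y : ℤ // k + 1 ≤ y}, W y := by
        rw [tsum_congr hsplit, ENNReal.tsum_add,
          ← tsum_subtype ({y : ℤ | y ≤ k}) W, ← tsum_subtype ({y : ℤ | k + 1 ≤ y}) W]
        rfl
    _ ≤ 1 := by
        rw [hW]
        rw [aux_lower ε c μ hε hc k hkμ, aux_upper ε c μ hε hc (k+1) (by push_cast; linarith)]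
        rw [← ENNReal.ofReal_add
          (div_nonneg (mul_nonneg hc (Real.exp_nonneg _)) hr1.le)
          (div_nonneg (mul_nonneg hc (Real.exp_nonneg _)) hr1.le)]
        refine ENNReal.ofReal_le_one.2 ?_
        set u := Real.exp (ε * (μ - k)) with hu
        set v := Real.exp (ε * ((k:ℝ) + 1 - μ)) with hv
        have hu1 : 1 ≤ u := Real.one_le_exp_iff.2 (by nlinarith)
        have hv1 : 1 ≤ v := Real.one_le_exp_iff.2 (by nlinarith)
        have huv : u * v = Real.exp ε := by
          rw [hu, hv, ← Real.exp_add]; ring_nf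
        have h1 : Real.exp (-ε * (μ - k)) = u⁻¹ := by
          rw [hu, ← Real.exp_neg]; ring_nf
        have h2 : Real.exp (-ε * (((k+1:ℤ):ℝ) - μ)) = v⁻¹ := by
          rw [hv, ← Real.exp_neg]; push_cast; ring_nf
        have hu0 : 0 < u := by linarith
        have hv0 : 0 < v := by linarith
        have key : u + v ≤ u * v + 1 := by nlinarith [(u - 1) * (v - 1)]
        rw [h1, h2, ← add_div, div_le_one hr1]
        have hrr : Real.exp (-ε) = (u * v)⁻¹ := by rw [huv, Real.exp_neg]
        rw [hcdef, ← huv, hrr]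
        have huv0 : 0 < u * v := mul_pos hu0 hv0
        have huv1 : 1 < u * v := by rw [huv]; exact hE
        rw [div_mul_eq_mul_div, div_mul_eq_mul_div, ← add_div]
        rw [div_le_iff₀ (by linarith)]
        have hexp : (1 - (u*v)⁻¹) * (u * v + 1) = (u*v - 1) * (u*v + 1) / (u*v) := by
          field_simp
        rw [hexp, le_div_iff₀ huv0]
        have e1 : u⁻¹ * (u*v) = v := by field_simp
        have e2 : v⁻¹ * (u*v) = u := by field_simp
        nlinarith [mul_le_mul_of_nonneg_left key (by linarith : (0:ℝ) ≤ u*v - 1), e1, e2]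

/-- **(ε, δ)-DP of the noisy-histogram mechanism with positive one-sided
Laplace noise.**  Independent noise `max 0 (z i)` with weight `w` is added to
every bin; for histograms `n, n'` differing by `1` in exactly one bin `j`,
`H n S ≤ e^ε · H n' S + δ` for every output set `S`. -/
theorem noisy_histogram_dp
    (ε δ : ℝ) (hε : 0 < ε) (hδ : δ ∈ Set.Ioo (0 : ℝ) 1)
    (hδε : δ * (Real.exp ε + 1) ≤ 1)
    (μ : ℝ) (hμ : μ = 1 - (1 / ε) * Real.log (δ * (Real.exp ε + 1)))
    (w : ℤ → ℝ)
    (hw : ∀ x : ℤ, w x =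
      ((Real.exp ε - 1) / (Real.exp ε + 1)) * Real.exp (-ε * |(x : ℝ) - μ|))
    (m : ℕ)
    (H : (Fin m → ℤ) → Set (Fin m → ℤ) → ℝ)
    (hH : ∀ (n : Fin m → ℤ) (S : Set (Fin m → ℤ)),
      H n S = ∑' z : Fin m → ℤ,
        S.indicator (fun _ => ∏ i, w (z i)) (fun i => n i + max 0 (z i)))
    (n n' : Fin m → ℤ) (j : Fin m)
    (hagree : ∀ i, i ≠ j → n i = n' i) (hj : |n j - n' j| = 1)
    (S : Set (Fin m → ℤ)) :
    H n S ≤ Real.exp ε * H n' S + δ := by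
  have hE : 1 < Real.exp ε := Real.one_lt_exp_iff.2 hε
  have hc : 0 ≤ (Real.exp ε - 1) / (Real.exp ε + 1) := by
    apply div_nonneg <;> linarith
  have hw0 : ∀ x : ℤ, 0 ≤ w x := by
    intro x; rw [hw]; exact mul_nonneg hc (Real.exp_nonneg _)
  have hD0 : 0 < δ * (Real.exp ε + 1) := by
    apply mul_pos hδ.1; linarith
  have hExp : Real.exp (ε * (1 - μ)) = δ * (Real.exp ε + 1) := by
    have h1 : ε * (1 - μ) = Real.log (δ * (Real.exp ε + 1)) := by
      rw [hμ]; field_simp; ring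
    rw [h1, Real.exp_log hD0]
  have hμ1 : 1 ≤ μ := by
    have hlog : Real.log (δ * (Real.exp ε + 1)) ≤ 0 := Real.log_nonpos hD0.le hδε
    rw [hμ]
    have : 0 < 1 / ε := by positivity
    nlinarith
  -- the step lemma
  have hstep : ∀ a b : ℤ, |(a : ℝ) - (b : ℝ)| ≤ 1 → w a ≤ Real.exp ε * w b := by
    intro a b hab
    rw [hw, hw, ← mul_assoc, mul_comm (Real.exp ε), mul_assoc]
    apply mul_le_mul_of_nonneg_left _ hc
    rw [← Real.exp_add]
    apply Real.exp_le_exp.2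
    have h1 : |(b : ℝ) - μ| ≤ |(a : ℝ) - μ| + 1 := by
      have := abs_sub_abs_le_abs_sub ((b : ℝ) - μ) ((a : ℝ) - μ)
      have h2 : |(b : ℝ) - μ - ((a : ℝ) - μ)| = |(a : ℝ) - (b : ℝ)| := by
        rw [← abs_neg]; ring_nf
      rw [h2] at this
      linarith
    nlinarith
  -- ENNReal machinery
  set W : ℤ → ℝ≥0∞ := fun y => ENNReal.ofReal (w y) with hWdef
  have hWof : ∀ y : ℤ, W y =
      ENNReal.ofReal (((Real.exp ε - 1) / (Real.exp ε + 1)) * Real.exp (-ε * |(y : ℝ) - μ|)) := by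
    intro y; rw [hWdef]; simp only []; rw [hw]
  have hT1 : (∑' y : ℤ, W y) ≤ 1 := by
    rw [tsum_congr hWof]; exact aux_M2 ε μ hε hμ1
  have hM1 : (∑' y : {y : ℤ // y ≤ (0:ℤ)}, W y) = ENNReal.ofReal δ := by
    rw [tsum_congr (fun y : {y : ℤ // y ≤ (0:ℤ)} => hWof y)]
    exact aux_M1 ε δ μ hε hδ.1 hExp hμ1
  have hprod : ∀ z : Fin m → ℤ, (∏ i, W (z i)) = ENNReal.ofReal (∏ i, w (z i)) :=
    fun z => (ENNReal.ofReal_prod_of_nonneg (fun i _ => hw0 _)).symm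
  set E : (Fin m → ℤ) → (Fin m → ℤ) → ℝ≥0∞ := fun nn z =>
    S.indicator (fun _ => ∏ i, W (z i)) (fun i => nn i + max 0 (z i)) with hEdef
  have hEfin : ∀ nn z, E nn z ≠ ⊤ := by
    intro nn z
    rw [hEdef]; simp only []
    by_cases h : (fun i => nn i + max 0 (z i)) ∈ S
    · rw [Set.indicator_of_mem h, hprod]; exact ENNReal.ofReal_ne_top
    · rw [Set.indicator_of_notMem h]; exact ENNReal.zero_ne_top
  have hHE : ∀ nn : Fin m → ℤ, H nn S = (∑' z : Fin m → ℤ, E nn z).toReal := by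
    intro nn
    rw [hH, ENNReal.tsum_toReal_eq (hEfin nn)]
    apply tsum_congr
    intro z
    rw [hEdef]; simp only []
    by_cases h : (fun i => nn i + max 0 (z i)) ∈ S
    · rw [Set.indicator_of_mem h, Set.indicator_of_mem h, hprod,
        ENNReal.toReal_ofReal (Finset.prod_nonneg (fun i _ => hw0 _))]
    · rw [Set.indicator_of_notMem h, Set.indicator_of_notMem h, ENNReal.toReal_zero]
  have hEle : ∀ nn z, E nn z ≤ ∏ i, W (z i) := by
    intro nn z
    rw [hEdef]; simp only []
    by_cases h : (fun i => nn i + max 0 (z i)) ∈ S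
    · rw [Set.indicator_of_mem h]
    · rw [Set.indicator_of_notMem h]; exact zero_le
  have hFle1 : ∀ nn : Fin m → ℤ, (∑' z : Fin m → ℤ, E nn z) ≤ 1 := by
    intro nn
    calc (∑' z : Fin m → ℤ, E nn z) ≤ ∑' z : Fin m → ℤ, ∏ i, W (z i) :=
          ENNReal.tsum_le_tsum (hEle nn)
      _ = ∏ _i : Fin m, ∑' y : ℤ, W y := aux_tsum_pi m (fun _ => W)
      _ = (∑' y : ℤ, W y) ^ m := by rw [Finset.prod_const, Finset.card_univ, Fintype.card_fin]
      _ ≤ 1 := pow_le_one' hT1 m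
  have hFfin : ∀ nn : Fin m → ℤ, (∑' z : Fin m → ℤ, E nn z) ≠ ⊤ :=
    fun nn => ((hFle1 nn).trans_lt ENNReal.one_lt_top).ne
  -- main ENNReal bound
  have hmain : (∑' z : Fin m → ℤ, E n z) ≤
      ENNReal.ofReal (Real.exp ε) * (∑' z : Fin m → ℤ, E n' z) + ENNReal.ofReal δ := by
    have hdecomp : ∀ z : Fin m → ℤ, E n z =
        (if z j ≤ 0 then E n z else 0) + (if 1 ≤ z j then E n z else 0) := by
      intro z
      by_cases h : z j ≤ 0
      · rw [if_pos h, if_neg (by omega), add_zero]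
      · rw [if_neg h, if_pos (by omega), zero_add]
    have hbound1 : (∑' z : Fin m → ℤ, if z j ≤ 0 then E n z else 0) ≤ ENNReal.ofReal δ := by
      set V : Fin m → ℤ → ℝ≥0∞ := fun i y => if i = j then (if y ≤ 0 then W y else 0) else W y
        with hVdef
      have hpt : ∀ z : Fin m → ℤ, (if z j ≤ 0 then E n z else 0) ≤ ∏ i, V i (z i) := by
        intro z
        by_cases h : z j ≤ 0
        · rw [if_pos h]
          refine (hEle n z).trans (le_of_eq ?_)
          refine Finset.prod_congr rfl (fun i _ => ?_)
          by_cases hij : i = j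
          · subst hij; simp only [hVdef, if_pos rfl, if_pos h]
          · simp only [hVdef, if_neg hij]
        · rw [if_neg h]; exact zero_le
      have hVj : (∑' y : ℤ, V j y) = ENNReal.ofReal δ := by
        have h1 : ∀ y : ℤ, V j y = ({y : ℤ | y ≤ 0}).indicator W y := by
          intro y
          simp only [hVdef, if_pos rfl, Set.indicator_apply, Set.mem_setOf_eq]
        rw [tsum_congr h1, ← tsum_subtype ({y : ℤ | y ≤ 0}) W]
        rw [← hM1]; rfl
      have hVi : ∀ i : Fin m, i ≠ j → (∑' y : ℤ, V i y) ≤ 1 := by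
        intro i hi
        have h1 : ∀ y : ℤ, V i y = W y := by intro y; simp only [hVdef, if_neg hi]
        rw [tsum_congr h1]; exact hT1
      calc (∑' z : Fin m → ℤ, if z j ≤ 0 then E n z else 0)
          ≤ ∑' z : Fin m → ℤ, ∏ i, V i (z i) := ENNReal.tsum_le_tsum hpt
        _ = ∏ i, ∑' y : ℤ, V i y := aux_tsum_pi m V
        _ = (∑' y : ℤ, V j y) * ∏ i ∈ Finset.univ.erase j, ∑' y : ℤ, V i y :=
            (Finset.mul_prod_erase Finset.univ _ (Finset.mem_univ j)).symm
        _ ≤ ENNReal.ofReal δ * 1 := by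
            rw [hVj]
            apply mul_le_mul_right
            exact Finset.prod_le_one (fun i _ => zero_le)
              (fun i hi => hVi i (Finset.ne_of_mem_erase hi))
        _ = ENNReal.ofReal δ := mul_one _
    have hbound2 : (∑' z : Fin m → ℤ, if 1 ≤ z j then E n z else 0) ≤
        ENNReal.ofReal (Real.exp ε) * (∑' z : Fin m → ℤ, E n' z) := by
      set A : Set (Fin m → ℤ) := {z | 1 ≤ z j} with hAdef
      have h1 : (∑' z : Fin m → ℤ, if 1 ≤ z j then E n z else 0) = ∑' z : A, E n z := by
        rw [tsum_subtype A (E n)]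
        refine tsum_congr (fun z => ?_)
        simp only [Set.indicator_apply, hAdef, Set.mem_setOf_eq]
      rw [h1]
      set s : ℤ := n j - n' j with hsdef
      have hs : s = 1 ∨ s = -1 := by
        rcases (abs_eq (by norm_num : (0:ℤ) ≤ 1)).1 hj with h | h
        · left; omega
        · right; omega
      set ι : A → (Fin m → ℤ) := fun p => Function.update p.1 j (p.1 j + s) with hιdef
      have hinj : Function.Injective ι := by
        intro p q h
        apply Subtype.ext
        funext i
        by_cases hij : i = j
        · subst hij
          have := congrFun h i
          rw [hιdef] at this; simp only [] at this
          rw [Function.update_self, Function.update_self] at this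
          omega
        · have := congrFun h i
          rw [hιdef] at this; simp only [] at this
          rw [Function.update_of_ne hij, Function.update_of_ne hij] at this
          exact this
      have hpt : ∀ p : A, E n p.1 ≤ ENNReal.ofReal (Real.exp ε) * E n' (ι p) := by
        intro p
        have hp1 : 1 ≤ p.1 j := p.2
        have hout : (fun i => n i + max 0 (p.1 i)) = (fun i => n' i + max 0 (ι p i)) := by
          funext i
          by_cases hij : i = j
          · subst hij
            rw [hιdef]; simp only []
            rw [Function.update_self]
            rcases hs with h | h <;> omega
          · rw [hιdef]; simp only []
            rw [Function.update_of_ne hij, hagree i hij]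
        rw [hEdef]; simp only []
        rw [← hout]
        by_cases hmem : (fun i => n i + max 0 (p.1 i)) ∈ S
        · rw [Set.indicator_of_mem hmem, Set.indicator_of_mem hmem]
          have hWj : W (p.1 j) ≤ ENNReal.ofReal (Real.exp ε) * W (ι p j) := by
            have hι : ι p j = p.1 j + s := by
              rw [hιdef]; simp only []; rw [Function.update_self]
            rw [hι, hWdef]; simp only []
            rw [← ENNReal.ofReal_mul (Real.exp_nonneg ε)]
            apply ENNReal.ofReal_le_ofReal
            apply hstep
            have : ((p.1 j : ℝ)) - ((p.1 j + s : ℤ) : ℝ) = -(s : ℝ) := by push_cast; ring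
            rw [this, abs_neg]
            rcases hs with h | h <;> rw [h] <;> norm_num
          have hrest : (∏ i ∈ Finset.univ.erase j, W (p.1 i)) =
              ∏ i ∈ Finset.univ.erase j, W (ι p i) := by
            refine Finset.prod_congr rfl (fun i hi => ?_)
            have hij : i ≠ j := Finset.ne_of_mem_erase hi
            rw [hιdef]; simp only []
            rw [Function.update_of_ne hij]
          calc (∏ i, W (p.1 i))
              = W (p.1 j) * ∏ i ∈ Finset.univ.erase j, W (p.1 i) :=
                (Finset.mul_prod_erase Finset.univ _ (Finset.mem_univ j)).symm
            _ ≤ (ENNReal.ofReal (Real.exp ε) * W (ι p j)) *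
                  ∏ i ∈ Finset.univ.erase j, W (ι p i) := by
                rw [hrest]; exact mul_le_mul_left hWj _
            _ = ENNReal.ofReal (Real.exp ε) * ∏ i, W (ι p i) := by
                rw [mul_assoc]
                congr 1
                exact Finset.mul_prod_erase Finset.univ (fun i => W (ι p i)) (Finset.mem_univ j)
        · rw [Set.indicator_of_notMem hmem, Set.indicator_of_notMem hmem, mul_zero]
      calc (∑' z : A, E n z)
          ≤ ∑' z : A, ENNReal.ofReal (Real.exp ε) * E n' (ι z) := ENNReal.tsum_le_tsum hpt
        _ = ENNReal.ofReal (Real.exp ε) * ∑' z : A, E n' (ι z) := ENNReal.tsum_mul_left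
        _ ≤ ENNReal.ofReal (Real.exp ε) * ∑' z : Fin m → ℤ, E n' z :=
            mul_le_mul_right (ENNReal.tsum_comp_le_tsum_of_injective hinj (E n')) _
    calc (∑' z : Fin m → ℤ, E n z)
        = (∑' z : Fin m → ℤ, if z j ≤ 0 then E n z else 0) +
            ∑' z : Fin m → ℤ, if 1 ≤ z j then E n z else 0 := by
          rw [tsum_congr hdecomp, ENNReal.tsum_add]
      _ ≤ ENNReal.ofReal δ + ENNReal.ofReal (Real.exp ε) * (∑' z : Fin m → ℤ, E n' z) :=
          add_le_add hbound1 hbound2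
      _ = ENNReal.ofReal (Real.exp ε) * (∑' z : Fin m → ℤ, E n' z) + ENNReal.ofReal δ :=
          add_comm _ _
  -- conclude in ℝ
  rw [hHE n, hHE n']
  have hmulfin : ENNReal.ofReal (Real.exp ε) * (∑' z : Fin m → ℤ, E n' z) ≠ ⊤ :=
    ENNReal.mul_ne_top ENNReal.ofReal_ne_top (hFfin n')
  have hRfin : ENNReal.ofReal (Real.exp ε) * (∑' z : Fin m → ℤ, E n' z) +
      ENNReal.ofReal δ ≠ ⊤ :=
    ENNReal.add_ne_top.2 ⟨hmulfin, ENNReal.ofReal_ne_top⟩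
  calc (∑' z : Fin m → ℤ, E n z).toReal
      ≤ (ENNReal.ofReal (Real.exp ε) * (∑' z : Fin m → ℤ, E n' z) +
          ENNReal.ofReal δ).toReal := ENNReal.toReal_mono hRfin hmain
    _ = Real.exp ε * (∑' z : Fin m → ℤ, E n' z).toReal + δ := by
        rw [ENNReal.toReal_add hmulfin ENNReal.ofReal_ne_top, ENNReal.toReal_mul,
          ENNReal.toReal_ofReal (Real.exp_nonneg ε), ENNReal.toReal_ofReal hδ.1.le]
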